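/- Let π* be a deterministic policy and π_f another deterministic policy in a finite-horizon MDP with rewards in [0,1] and horizon H. Then v^{π_f} ≥ v^{π*} − H · E[∑_{h=0}^{H-1} 𝟙{π_f(x_h) ≠ π*(x_h)} | trajectory drawn under π*]. -/
import Mathlib


open Finset

/-- Value function of policy `π` with `k` steps to go (so at time `H - k`). -/
noncomputable def stmt6Vf {X A : Type*} [Fintype X] (H : ℕ) (P : ℕ → X → A → X → ℝ)
    (R : ℕ → X → A → ℝ) (π : ℕ → X → A) : ℕ → X → ℝ
  | 0, _ => 0
  | k + 1, x => R (H - k - 1) x (π (H - k - 1) x) +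
      ∑ x', P (H - k - 1) x (π (H - k - 1) x) x' * stmt6Vf H P R π k x'

/-- RL-to-SL reduction: for deterministic policies `π*` and `π_f` in a
finite-horizon MDP with rewards in `[0,1]`,
`v^{π_f} ≥ v^{π*} − H·E[∑_{h<H} 𝟙{π_f(x_h) ≠ π*(x_h)} | π*]`, where the
expectation is over the state distribution induced by `π*`.  Here `ρs` (resp.
`ρf`) is the state distribution at each step under `π*` (resp. `π_f`) started
from `x_0`, and `v^π = ∑_{h<H} E_{x∼ρ^π_h}[R_h(x, π(x))]`. -/
theorem stmt6 {X A : Type*} [Fintype X] [Fintype A] [DecidableEq X] [DecidableEq A]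
    (H : ℕ) (x0 : X)
    (P : ℕ → X → A → X → ℝ) (hPnn : ∀ h x a x', 0 ≤ P h x a x')
    (hP1 : ∀ h x a, ∑ x', P h x a x' = 1)
    (R : ℕ → X → A → ℝ) (hR : ∀ h x a, 0 ≤ R h x a ∧ R h x a ≤ 1)
    (πstar πf : ℕ → X → A)
    (ρs ρf : ℕ → X → ℝ)
    (hρs0 : ∀ x, ρs 0 x = if x = x0 then 1 else 0)
    (hρs : ∀ h x', ρs (h + 1) x' = ∑ x, ρs h x * P h x (πstar h x) x')
    (hρf0 : ∀ x, ρf 0 x = if x = x0 then 1 else 0)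
    (hρf : ∀ h x', ρf (h + 1) x' = ∑ x, ρf h x * P h x (πf h x) x') :
    (∑ h ∈ range H, ∑ x, ρs h x * R h x (πstar h x))
      - H * (∑ h ∈ range H, ∑ x, ρs h x * (if πf h x ≠ πstar h x then 1 else 0))
      ≤ ∑ h ∈ range H, ∑ x, ρf h x * R h x (πf h x) := by
  set V : ℕ → X → ℝ := stmt6Vf H P R πf with hV
  -- nonnegativity of ρs
  have hρs_nn : ∀ h x, 0 ≤ ρs h x := by
    intro h
    induction h with
    | zero => intro x; rw [hρs0]; split <;> norm_num
    | succ h ih =>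
      intro x'
      rw [hρs]
      exact Finset.sum_nonneg fun x _ => mul_nonneg (ih x) (hPnn _ _ _ _)
  -- bounds on V
  have hV_nn : ∀ k x, 0 ≤ V k x := by
    intro k
    induction k with
    | zero => intro x; simp [hV, stmt6Vf]
    | succ k ih =>
      intro x
      show 0 ≤ stmt6Vf H P R πf (k + 1) x
      rw [stmt6Vf]
      have h1 := (hR (H - k - 1) x (πf (H - k - 1) x)).1
      have h2 : 0 ≤ ∑ x', P (H - k - 1) x (πf (H - k - 1) x) x' * stmt6Vf H P R πf k x' :=
        Finset.sum_nonneg fun x' _ => mul_nonneg (hPnn _ _ _ _) (ih x')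
      linarith
  have hV_le : ∀ k x, V k x ≤ (k : ℝ) := by
    intro k
    induction k with
    | zero => intro x; simp [hV, stmt6Vf]
    | succ k ih =>
      intro x
      push_cast
      show stmt6Vf H P R πf (k + 1) x ≤ (k : ℝ) + 1
      rw [stmt6Vf]
      have h1 := (hR (H - k - 1) x (πf (H - k - 1) x)).2
      have h2 : ∑ x', P (H - k - 1) x (πf (H - k - 1) x) x' * stmt6Vf H P R πf k x'
          ≤ ∑ x', P (H - k - 1) x (πf (H - k - 1) x) x' * (k : ℝ) := by
        refine Finset.sum_le_sum fun x' _ => ?_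
        exact mul_le_mul_of_nonneg_left (ih x') (hPnn _ _ _ _)
      rw [← Finset.sum_mul, hP1, one_mul] at h2
      linarith
  -- value of πf as expectation of V over ρf
  have hvalue : ∀ k h, h + k = H →
      ∑ x, ρf h x * V k x = ∑ h' ∈ Finset.Ico h H, ∑ x, ρf h' x * R h' x (πf h' x) := by
    intro k
    induction k with
    | zero =>
      intro h hh
      subst hh
      simp [hV, stmt6Vf]
    | succ k ih =>
      intro h hh
      have hidx : H - k - 1 = h := by omega
      have hVk : ∀ x, V (k + 1) x = R h x (πf h x) +
          ∑ x', P h x (πf h x) x' * V k x' := by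
        intro x
        show stmt6Vf H P R πf (k + 1) x = _
        rw [stmt6Vf, hidx]
      have hswap : ∑ x, ρf h x * ∑ x', P h x (πf h x) x' * V k x'
          = ∑ x', ρf (h + 1) x' * V k x' := by
        calc ∑ x, ρf h x * ∑ x', P h x (πf h x) x' * V k x'
            = ∑ x, ∑ x', ρf h x * P h x (πf h x) x' * V k x' := by
              refine Finset.sum_congr rfl fun x _ => ?_
              rw [Finset.mul_sum]
              exact Finset.sum_congr rfl fun x' _ => by ring
          _ = ∑ x', ∑ x, ρf h x * P h x (πf h x) x' * V k x' := Finset.sum_comm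
          _ = ∑ x', ρf (h + 1) x' * V k x' := by
              refine Finset.sum_congr rfl fun x' _ => ?_
              rw [hρf, Finset.sum_mul]
      calc ∑ x, ρf h x * V (k + 1) x
          = ∑ x, (ρf h x * R h x (πf h x) + ρf h x * ∑ x', P h x (πf h x) x' * V k x') := by
            refine Finset.sum_congr rfl fun x _ => ?_
            rw [hVk x]; ring
        _ = (∑ x, ρf h x * R h x (πf h x)) + ∑ x', ρf (h + 1) x' * V k x' := by
            rw [Finset.sum_add_distrib, hswap]
        _ = (∑ x, ρf h x * R h x (πf h x)) +
              ∑ h' ∈ Finset.Ico (h + 1) H, ∑ x, ρf h' x * R h' x (πf h' x) := by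
            rw [ih (h + 1) (by omega)]
        _ = ∑ h' ∈ Finset.Ico h H, ∑ x, ρf h' x * R h' x (πf h' x) :=
            (Finset.sum_eq_sum_Ico_succ_bot (show h < H by omega) (fun h' => ∑ x, ρf h' x * R h' x (πf h' x))).symm
  -- the telescoping sequence
  set S : ℕ → ℝ := fun h => ∑ x, ρs h x * V (H - h) x with hS
  have hS0 : S 0 = ∑ h ∈ range H, ∑ x, ρf h x * R h x (πf h x) := by
    have h1 : S 0 = ∑ x, ρf 0 x * V H x := by
      simp only [hS, Nat.sub_zero]
      exact Finset.sum_congr rfl fun x _ => by rw [hρs0, hρf0]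
    rw [h1, hvalue H 0 (by omega), Finset.range_eq_Ico]
  have hSH : S H = 0 := by
    simp [hS, hV, stmt6Vf]
  -- per-step bound
  have hstep : ∀ h ∈ range H,
      (∑ x, ρs h x * R h x (πstar h x)) + (S (h + 1) - S h)
        ≤ (H : ℝ) * ∑ x, ρs h x * (if πf h x ≠ πstar h x then 1 else 0) := by
    intro h hh
    rw [Finset.mem_range] at hh
    obtain ⟨k, hk⟩ : ∃ k, H - h = k + 1 := ⟨H - h - 1, by omega⟩
    have hidx : H - k - 1 = h := by omega
    have hVk : ∀ x, V (H - h) x = R h x (πf h x) +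
        ∑ x', P h x (πf h x) x' * V k x' := by
      intro x
      rw [hk]
      show stmt6Vf H P R πf (k + 1) x = _
      rw [stmt6Vf, hidx]
    have hSh1 : S (h + 1) = ∑ x, ρs h x * ∑ x', P h x (πstar h x) x' * V k x' := by
      have hk' : H - (h + 1) = k := by omega
      simp only [hS, hk']
      calc ∑ x', ρs (h + 1) x' * V k x'
          = ∑ x', ∑ x, ρs h x * P h x (πstar h x) x' * V k x' := by
            refine Finset.sum_congr rfl fun x' _ => ?_
            rw [hρs, Finset.sum_mul]
        _ = ∑ x, ∑ x', ρs h x * P h x (πstar h x) x' * V k x' := Finset.sum_comm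
        _ = ∑ x, ρs h x * ∑ x', P h x (πstar h x) x' * V k x' := by
            refine Finset.sum_congr rfl fun x _ => ?_
            rw [Finset.mul_sum]
            exact Finset.sum_congr rfl fun x' _ => by ring
    have key : ∀ x, ρs h x * R h x (πstar h x)
        + ρs h x * (∑ x', P h x (πstar h x) x' * V k x') - ρs h x * V (H - h) x
        ≤ ρs h x * ((H : ℝ) * (if πf h x ≠ πstar h x then 1 else 0)) := by
      intro x
      rw [hVk x]
      by_cases hd : πf h x = πstar h x
      · rw [hd]
        have h0 : (if πstar h x ≠ πstar h x then (1 : ℝ) else 0) = 0 := by simp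
        rw [h0]
        apply le_of_eq
        ring
      · have hind : (if πf h x ≠ πstar h x then (1 : ℝ) else 0) = 1 := by simp [hd]
        rw [hind, mul_one]
        have hg : R h x (πstar h x)
            + (∑ x', P h x (πstar h x) x' * V k x')
            - (R h x (πf h x) + ∑ x', P h x (πf h x) x' * V k x') ≤ (H : ℝ) := by
          have h1 := (hR h x (πstar h x)).2
          have h2 := (hR h x (πf h x)).1
          have h3 : ∑ x', P h x (πstar h x) x' * V k x' ≤ (k : ℝ) := by
            calc ∑ x', P h x (πstar h x) x' * V k x'
                ≤ ∑ x', P h x (πstar h x) x' * (k : ℝ) :=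
                  Finset.sum_le_sum fun x' _ =>
                    mul_le_mul_of_nonneg_left (hV_le k x') (hPnn _ _ _ _)
              _ = (k : ℝ) := by rw [← Finset.sum_mul, hP1, one_mul]
          have h4 : 0 ≤ ∑ x', P h x (πf h x) x' * V k x' :=
            Finset.sum_nonneg fun x' _ => mul_nonneg (hPnn _ _ _ _) (hV_nn k x')
          have hkH : (k : ℝ) + 1 ≤ (H : ℝ) := by
            have : k + 1 ≤ H := by omega
            exact_mod_cast this
          linarith
        nlinarith [hρs_nn h x, hg]
    calc (∑ x, ρs h x * R h x (πstar h x)) + (S (h + 1) - S h)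
        = ∑ x, (ρs h x * R h x (πstar h x)
            + ρs h x * (∑ x', P h x (πstar h x) x' * V k x') - ρs h x * V (H - h) x) := by
          rw [hSh1]
          simp only [hS]
          rw [Finset.sum_sub_distrib, Finset.sum_add_distrib]
          ring
      _ ≤ ∑ x, ρs h x * ((H : ℝ) * (if πf h x ≠ πstar h x then 1 else 0)) :=
          Finset.sum_le_sum fun x _ => key x
      _ = (H : ℝ) * ∑ x, ρs h x * (if πf h x ≠ πstar h x then 1 else 0) := by
          rw [Finset.mul_sum]
          exact Finset.sum_congr rfl fun x _ => by ring
  have htel : ∑ h ∈ range H, (S (h + 1) - S h) = S H - S 0 := Finset.sum_range_sub S H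
  have hsum := Finset.sum_le_sum hstep
  rw [Finset.sum_add_distrib, htel, hSH, ← Finset.mul_sum] at hsum
  rw [hS0] at hsum
  linarith
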